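/- Let X ∈ 𝒦 ∩ 𝒫 satisfy ‖Y − ΦX‖_F ≤ ‖Y‖_F, and let X_R denote the orthogonal projection (with respect to the Frobenius inner product) of X onto the orthogonal complement of Null(Φ) in ℝ^{n×L}. Then ‖X_R‖_F ≤ 2·σ_min⁻¹·‖Y‖_F, where σ_min is the smallest nonzero singular value of Φ. -/

import Mathlib

open Matrix Finset
open scoped RealInnerProductSpace

/-- Frobenius norm of a real matrix. -/
noncomputable def frob {a b : ℕ} (A : Matrix (Fin a) (Fin b) ℝ) : ℝ :=
  Real.sqrt (∑ i, ∑ j, (A i j) ^ 2)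

/-- The set of a×b matrices whose every column has at most k nonzero entries. -/
def colSparse (a b k : ℕ) : Set (Matrix (Fin a) (Fin b) ℝ) :=
  {Θ | ∀ l, ({i | Θ i l ≠ 0} : Set (Fin a)).ncard ≤ k}

/-- The set of a×b matrices having at most p nonzero rows. -/
def rowSparse (a b p : ℕ) : Set (Matrix (Fin a) (Fin b) ℝ) :=
  {Θ | ({i | ∃ l, Θ i l ≠ 0} : Set (Fin a)).ncard ≤ p}


lemma spec_bound {m n : ℕ} (Φ : Matrix (Fin m) (Fin n) ℝ) (hΦ : Φ ≠ 0)
    (σ : ℝ) (hσ : σ = sInf {s : ℝ | 0 < s ∧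
      ∃ v : Fin n → ℝ, v ≠ 0 ∧ (Φ.transpose * Φ).mulVec v = (s ^ 2) • v}) :
    0 < σ ∧ ∀ x : Fin n → ℝ, (∀ v : Fin n → ℝ, Φ *ᵥ v = 0 → x ⬝ᵥ v = 0) →
      σ ^ 2 * (x ⬝ᵥ x) ≤ (Φ *ᵥ x) ⬝ᵥ (Φ *ᵥ x) := by
  set A : Matrix (Fin n) (Fin n) ℝ := Φᵀ * Φ with hAdef
  have hA : A.IsHermitian := Matrix.isHermitian_conjTranspose_mul_self Φ
  set μ := hA.eigenvalues with hμdef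
  set u := hA.eigenvectorBasis with hudef
  have hμnn : ∀ i, 0 ≤ μ i := fun i =>
    (Matrix.posSemidef_conjTranspose_mul_self Φ).eigenvalues_nonneg i
  -- inner product on EuclideanSpace is dotProduct
  have hinner : ∀ x y : EuclideanSpace ℝ (Fin n), (inner ℝ x y : ℝ) = (x : Fin n → ℝ) ⬝ᵥ y := by
    intro x y
    simp [PiLp.inner_apply, dotProduct, RCLike.inner_apply, mul_comm]
  -- x ⬝ A x = ‖Φ x‖²
  have hdotA : ∀ x : Fin n → ℝ, x ⬝ᵥ (A *ᵥ x) = (Φ *ᵥ x) ⬝ᵥ (Φ *ᵥ x) := by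
    intro x
    rw [hAdef, ← Matrix.mulVec_mulVec, Matrix.dotProduct_mulVec, Matrix.vecMul_transpose]
  -- symmetry of A in dot products
  have hsymm : ∀ x y : Fin n → ℝ, x ⬝ᵥ (A *ᵥ y) = (A *ᵥ x) ⬝ᵥ y := by
    intro x y
    rw [Matrix.dotProduct_mulVec, ← Matrix.vecMul_transpose,
      show Aᵀ = A from hA.eq]
  -- any eigenvalue (of form s², eigvec ≠ 0) belongs to range μ
  have heig : ∀ (lam : ℝ) (v : Fin n → ℝ), v ≠ 0 → A *ᵥ v = lam • v → ∃ i, μ i = lam := by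
    intro lam v hv hav
    by_contra hno
    push_neg at hno
    apply hv
    have hcoef : ∀ i, (inner ℝ (u i) (WithLp.toLp 2 v) : ℝ) = 0 := by
      intro i
      have h1 : (u i : Fin n → ℝ) ⬝ᵥ (A *ᵥ v) = lam * ((u i : Fin n → ℝ) ⬝ᵥ v) := by
        rw [hav, dotProduct_smul, smul_eq_mul]
      have h2 : (u i : Fin n → ℝ) ⬝ᵥ (A *ᵥ v) = μ i * ((u i : Fin n → ℝ) ⬝ᵥ v) := by
        rw [hsymm]
        have h := congrArg (fun z : Fin n → ℝ => z ⬝ᵥ v) (hA.mulVec_eigenvectorBasis i)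
        simp only [smul_dotProduct, smul_eq_mul] at h
        exact h
      have := h1.symm.trans h2
      have hne : μ i - lam ≠ 0 := sub_ne_zero.mpr (hno i)
      have : (μ i - lam) * ((u i : Fin n → ℝ) ⬝ᵥ v) = 0 := by ring_nf; linarith [this]
      rw [hinner]
      rcases mul_eq_zero.mp this with h | h
      · exact absurd h hne
      · exact h
    have := u.sum_repr' (WithLp.toLp 2 v)
    simp only [hcoef, zero_smul, Finset.sum_const_zero] at this
    simpa using congrArg WithLp.ofLp this.symm
  -- kernel eigenvectors are in kernel of Φ
  have hker : ∀ i, μ i = 0 → Φ *ᵥ (u i : Fin n → ℝ) = 0 := by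
    intro i h0
    have hAz : A *ᵥ (u i : Fin n → ℝ) = 0 := by
      have h := hA.mulVec_eigenvectorBasis i
      rw [show hA.eigenvalues i = (0:ℝ) from h0, zero_smul] at h
      exact h
    have : (Φ *ᵥ (u i : Fin n → ℝ)) ⬝ᵥ (Φ *ᵥ (u i : Fin n → ℝ)) = 0 := by
      rw [← hdotA, hAz, dotProduct_zero]
    exact dotProduct_self_eq_zero.mp this
  set S := {s : ℝ | 0 < s ∧ ∃ v : Fin n → ℝ, v ≠ 0 ∧ A *ᵥ v = (s ^ 2) • v} with hS
  have hmem : ∀ i, 0 < μ i → Real.sqrt (μ i) ∈ S := by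
    intro i h
    refine ⟨Real.sqrt_pos.mpr h, (u i : Fin n → ℝ), ?_, ?_⟩
    · have hne := u.orthonormal.ne_zero i
      intro hc
      exact hne (by ext j; exact congrFun hc j)
    · rw [Real.sq_sqrt h.le]
      exact hA.mulVec_eigenvectorBasis i
  have hex : ∃ i, 0 < μ i := by
    by_contra h
    push_neg at h
    have h0 : ∀ i, μ i = 0 := fun i => le_antisymm (h i) (hμnn i)
    apply hΦ
    have hAz : A = 0 := by
      have hmv : ∀ x : Fin n → ℝ, A *ᵥ x = 0 := by
        intro x
        have hxsum : ∑ i, ((u i : Fin n → ℝ) ⬝ᵥ x) • (u i : Fin n → ℝ) = x := by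
          have h2 : ∀ i : Fin n, (inner ℝ (u i) (WithLp.toLp 2 x) : ℝ)
              = (u i : Fin n → ℝ) ⬝ᵥ x := fun i => hinner _ _
          calc ∑ i, ((u i : Fin n → ℝ) ⬝ᵥ x) • (u i : Fin n → ℝ)
              = ∑ i, (inner ℝ (u i) (WithLp.toLp 2 x) : ℝ) • (u i : Fin n → ℝ) := by
                simp_rw [h2]
            _ = x := by simpa using congrArg WithLp.ofLp (u.sum_repr' (WithLp.toLp 2 x))
        conv_lhs => rw [← hxsum]
        rw [← Matrix.mulVecLin_apply, map_sum]
        have hz : ∀ i : Fin n, A *ᵥ (u i : Fin n → ℝ) = 0 := by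
          intro i
          have hm := hA.mulVec_eigenvectorBasis i
          rw [show hA.eigenvalues i = (0:ℝ) from h0 i, zero_smul] at hm
          exact hm
        refine Finset.sum_eq_zero fun i _ => ?_
        rw [LinearMap.map_smul, Matrix.mulVecLin_apply, hz i, smul_zero]
      ext i j
      have := congrFun (hmv (Pi.single j 1)) i
      rw [Matrix.mulVec_single_one] at this
      simpa [Matrix.transpose_apply] using this
    exact Matrix.conjTranspose_mul_self_eq_zero.mp hAz
  obtain ⟨i0, hi0⟩ := hex
  have hSne : S.Nonempty := ⟨_, hmem i0 hi0⟩
  classical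
  set F : Finset (Fin n) := Finset.univ.filter (fun i => 0 < μ i) with hF
  have hFne : F.Nonempty := ⟨i0, by simp [hF, hi0]⟩
  set m0 : ℝ := F.inf' hFne (fun i => Real.sqrt (μ i)) with hm0
  have hm0pos : 0 < m0 := by
    rw [hm0, Finset.lt_inf'_iff]
    intro i hi
    exact Real.sqrt_pos.mpr (by simpa [hF] using hi)
  have hlb : ∀ s ∈ S, m0 ≤ s := by
    rintro s ⟨hs, v, hv, hav⟩
    obtain ⟨i, hi⟩ := heig (s ^ 2) v hv hav
    have hiF : i ∈ F := by
      simp only [hF, Finset.mem_filter, Finset.mem_univ, true_and]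
      rw [hi]; positivity
    have : Real.sqrt (μ i) = s := by
      rw [hi, Real.sqrt_sq hs.le]
    calc m0 ≤ Real.sqrt (μ i) := Finset.inf'_le _ hiF
      _ = s := this
  have hbdd : BddBelow S := ⟨m0, hlb⟩
  have hσpos : 0 < σ := by
    rw [hσ]
    exact lt_of_lt_of_le hm0pos (le_csInf hSne hlb)
  have hσnn : 0 ≤ σ := hσpos.le
  have hσle : ∀ i, 0 < μ i → σ ^ 2 ≤ μ i := by
    intro i hi
    have h1 : σ ≤ Real.sqrt (μ i) := hσ ▸ csInf_le hbdd (hmem i hi)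
    calc σ ^ 2 ≤ Real.sqrt (μ i) ^ 2 := by
          apply pow_le_pow_left₀ hσnn h1
      _ = μ i := Real.sq_sqrt hi.le
  refine ⟨hσpos, ?_⟩
  intro x hx
  set c : Fin n → ℝ := fun i => (u i : Fin n → ℝ) ⬝ᵥ x with hc
  have hxsum : ∑ i, c i • (u i : Fin n → ℝ) = x := by
    have := congrArg WithLp.ofLp (u.sum_repr' (WithLp.toLp 2 x))
    have h2 : ∀ i, (inner ℝ (u i) (WithLp.toLp 2 x) : ℝ) = c i := fun i => hinner _ _
    calc ∑ i, c i • (u i : Fin n → ℝ)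
        = ∑ i, (inner ℝ (u i) (WithLp.toLp 2 x) : ℝ) • (u i : Fin n → ℝ) := by
          simp_rw [h2]
      _ = x := by simpa using this
  have dsum : ∀ (y : Fin n → ℝ) (f : Fin n → Fin n → ℝ),
      y ⬝ᵥ (∑ i, f i) = ∑ i, y ⬝ᵥ f i := by
    intro y f
    simp only [dotProduct, Finset.sum_apply, Finset.mul_sum]
    exact Finset.sum_comm
  have hAx : A *ᵥ x = ∑ i, (μ i * c i) • (u i : Fin n → ℝ) := by
    conv_lhs => rw [← hxsum]
    rw [← Matrix.mulVecLin_apply, map_sum]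
    refine Finset.sum_congr rfl fun i _ => ?_
    rw [LinearMap.map_smul, Matrix.mulVecLin_apply,
      show A *ᵥ (u i : Fin n → ℝ) = μ i • (u i : Fin n → ℝ) from hA.mulVec_eigenvectorBasis i,
      smul_smul, mul_comm]
  have hxAx : x ⬝ᵥ (A *ᵥ x) = ∑ i, μ i * c i ^ 2 := by
    rw [hAx, dsum]
    refine Finset.sum_congr rfl fun i _ => ?_
    rw [dotProduct_smul, smul_eq_mul, dotProduct_comm]
    have hci : (u i : Fin n → ℝ) ⬝ᵥ x = c i := rfl
    rw [hci]; ring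
  have hxx : x ⬝ᵥ x = ∑ i, c i ^ 2 := by
    have hh : x ⬝ᵥ (∑ i, c i • (u i : Fin n → ℝ)) = ∑ i, c i ^ 2 := by
      rw [dsum]
      refine Finset.sum_congr rfl fun i _ => ?_
      rw [dotProduct_smul, smul_eq_mul, dotProduct_comm]
      have hci : (u i : Fin n → ℝ) ⬝ᵥ x = c i := rfl
      rw [hci]; ring
    rw [← hh, hxsum]
  rw [← hdotA, hxAx, hxx, Finset.mul_sum]
  refine Finset.sum_le_sum fun i _ => ?_
  rcases lt_or_eq_of_le (hμnn i) with hpos | hzero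
  · exact mul_le_mul_of_nonneg_right (hσle i hpos) (sq_nonneg _)
  · have hci : c i = 0 := by
      rw [hc]
      have := hx _ (hker i hzero.symm)
      rw [dotProduct_comm] at this
      exact this
    simp [hci, ← hzero]

noncomputable def matToE {a b : ℕ} (A : Matrix (Fin a) (Fin b) ℝ) :
    EuclideanSpace ℝ (Fin a × Fin b) :=
  (WithLp.equiv 2 _).symm (fun p => A p.1 p.2)

lemma matToE_sub {a b : ℕ} (A B : Matrix (Fin a) (Fin b) ℝ) :
    matToE (A - B) = matToE A - matToE B := rfl

lemma frob_eq_norm {a b : ℕ} (A : Matrix (Fin a) (Fin b) ℝ) :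
    frob A = ‖matToE A‖ := by
  rw [EuclideanSpace.norm_eq]
  unfold frob
  congr 1
  rw [Fintype.sum_prod_type]
  simp [matToE, Real.norm_eq_abs, sq_abs]

lemma frob_nonneg {a b : ℕ} (A : Matrix (Fin a) (Fin b) ℝ) : 0 ≤ frob A :=
  Real.sqrt_nonneg _

lemma frob_sq {a b : ℕ} (A : Matrix (Fin a) (Fin b) ℝ) :
    frob A ^ 2 = ∑ i, ∑ j, (A i j) ^ 2 := by
  unfold frob
  rw [Real.sq_sqrt]
  positivity

lemma frob_sub_le {a b : ℕ} (A B : Matrix (Fin a) (Fin b) ℝ) :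
    frob (A - B) ≤ frob A + frob B := by
  rw [frob_eq_norm, frob_eq_norm, frob_eq_norm, matToE_sub]
  exact norm_sub_le _ _

theorem stmt_18 (m n L k p : ℕ) (hm : 0 < m) (hn : 0 < n) (hL : 0 < L)
    (hk : 0 < k) (hp : 0 < p)
    (Φ : Matrix (Fin m) (Fin n) ℝ) (hΦ : Φ ≠ 0)
    (Y : Matrix (Fin m) (Fin L) ℝ)
    (σmin : ℝ)
    (hσ : σmin = sInf {s : ℝ | 0 < s ∧
      ∃ v : Fin n → ℝ, v ≠ 0 ∧ (Φ.transpose * Φ).mulVec v = (s ^ 2) • v})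
    (X XR : Matrix (Fin n) (Fin L) ℝ)
    (hX : X ∈ colSparse n L k ∩ rowSparse n L p)
    (hobj : frob (Y - Φ * X) ≤ frob Y)
    (hXR1 : Φ * (X - XR) = 0)
    (hXR2 : ∀ W : Matrix (Fin n) (Fin L) ℝ, Φ * W = 0 → Matrix.trace (XR.transpose * W) = 0) :
    frob XR ≤ 2 * σmin⁻¹ * frob Y := by
  classical
  obtain ⟨hσpos, hspec⟩ := spec_bound Φ hΦ σmin hσ
  have hPhiX : Φ * XR = Φ * X := by
    have h := hXR1
    rw [Matrix.mul_sub, sub_eq_zero] at h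
    exact h.symm
  have h2Y : frob (Φ * X) ≤ 2 * frob Y := by
    calc frob (Φ * X) = frob (Y - (Y - Φ * X)) := by rw [sub_sub_cancel]
      _ ≤ frob Y + frob (Y - Φ * X) := frob_sub_le _ _
      _ ≤ 2 * frob Y := by linarith
  -- columns of XR are orthogonal to ker Φ
  have hcol : ∀ l : Fin L, ∀ v : Fin n → ℝ, Φ *ᵥ v = 0 → (fun i => XR i l) ⬝ᵥ v = 0 := by
    intro l v hv
    set W : Matrix (Fin n) (Fin L) ℝ := Matrix.of fun i l' => if l' = l then v i else 0 with hWdef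
    have hW : Φ * W = 0 := by
      ext i l'
      simp only [Matrix.mul_apply, hWdef, Matrix.of_apply, Matrix.zero_apply, mul_ite, mul_zero]
      by_cases h : l' = l
      · simp only [h, if_pos rfl, if_true]
        exact congrFun hv i
      · simp [h]
    have ht := hXR2 W hW
    have ht2 : Matrix.trace (XRᵀ * W) = (fun i => XR i l) ⬝ᵥ v := by
      simp only [Matrix.trace, Matrix.diag, Matrix.mul_apply, Matrix.transpose_apply,
        hWdef, Matrix.of_apply, mul_ite, mul_zero]
      rw [Finset.sum_comm]
      simp [dotProduct, mul_comm]
    rw [ht2] at ht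
    exact ht
  -- per-column sums
  have hXRsq : frob XR ^ 2 = ∑ l, (fun i => XR i l) ⬝ᵥ (fun i => XR i l) := by
    rw [frob_sq, Finset.sum_comm]
    simp [dotProduct, pow_two]
  have hPXRsq : frob (Φ * XR) ^ 2
      = ∑ l, (Φ *ᵥ (fun i => XR i l)) ⬝ᵥ (Φ *ᵥ (fun i => XR i l)) := by
    rw [frob_sq, Finset.sum_comm]
    refine Finset.sum_congr rfl fun l _ => ?_
    simp [dotProduct, Matrix.mulVec, Matrix.mul_apply, pow_two]
  have hsum : σmin ^ 2 * frob XR ^ 2 ≤ frob (Φ * XR) ^ 2 := by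
    rw [hXRsq, hPXRsq, Finset.mul_sum]
    exact Finset.sum_le_sum fun l _ => hspec _ (hcol l)
  have hkey : σmin * frob XR ≤ 2 * frob Y := by
    have h1 : (σmin * frob XR) ^ 2 ≤ (2 * frob Y) ^ 2 := by
      calc (σmin * frob XR) ^ 2 = σmin ^ 2 * frob XR ^ 2 := by ring
        _ ≤ frob (Φ * XR) ^ 2 := hsum
        _ = frob (Φ * X) ^ 2 := by rw [hPhiX]
        _ ≤ (2 * frob Y) ^ 2 := by
            apply pow_le_pow_left₀ (frob_nonneg _) h2Y
    have hnn1 : 0 ≤ σmin * frob XR := mul_nonneg hσpos.le (frob_nonneg _)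
    have hnn2 : 0 ≤ 2 * frob Y := by
      have := frob_nonneg Y; linarith
    exact (pow_le_pow_iff_left₀ hnn1 hnn2 two_ne_zero).mp h1
  calc frob XR = σmin⁻¹ * (σmin * frob XR) := by
        field_simp
    _ ≤ σmin⁻¹ * (2 * frob Y) := by
        apply mul_le_mul_of_nonneg_left hkey (inv_nonneg.mpr hσpos.le)
    _ = 2 * σmin⁻¹ * frob Y := by ring
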